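/- Consider the layer problem of Goldbeter's mitotic oscillator: f(X,M,C) = X M (1−X)(1−M) and N(X,M,C) = (M − 7/10, 6C/(1+2C) − 3/2, (1−X−C)/4), defined for C ≠ −1/2. Then: (a) for every (0, M, C) on the face S = {X = 0} of the critical manifold, (L_N f)(0, M, C) = M(1−M)(M − 7/10), so on {0 < M < 1} the contact set within this face is the fold line F = {X = 0, M = 7/10}; and (b) for every point (0, 7/10, C) ∈ F, (L_N² f)(0, 7/10, C) = (63/200)(2C − 1)/(2C + 1), which vanishes only at C = 1/2. Hence every point of F with C ≠ 1/2 (and C ≠ −1/2) is a nondegenerate (order-one) contact fold. -/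

import Mathlib

/-- The Lie derivative of a scalar function g along the vector field N:
(L_N g)(z) = Dg(z) N(z). Iterated Lie derivatives are given by `(lieD N)^[j] g`. -/
noncomputable def lieD {n : ℕ} (N : (Fin n → ℝ) → (Fin n → ℝ))
    (g : (Fin n → ℝ) → ℝ) : (Fin n → ℝ) → ℝ :=
  fun z => fderiv ℝ g z (N z)

/-- For Goldbeter's mitotic oscillator layer problem (defined for
C ≠ −1/2): (a) on the face {X = 0}, L_N f(0,M,C) = M(1−M)(M − 7/10), so for
0 < M < 1 the contact set within this face is the fold line {X = 0, M = 7/10};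
(b) on this line L_N² f(0, 7/10, C) = (63/200)(2C−1)/(2C+1), which vanishes only at
C = 1/2; hence every point of the fold line with C ≠ 1/2 is an order-one contact
fold. -/
theorem mitotic_oscillator_folds
    (f : (Fin 3 → ℝ) → ℝ)
    (hf : f = fun p => p 0 * p 1 * (1 - p 0) * (1 - p 1))
    (N : (Fin 3 → ℝ) → (Fin 3 → ℝ))
    (hN : N = fun p => ![p 1 - 7 / 10,
      6 * p 2 / (1 + 2 * p 2) - 3 / 2, (1 - p 0 - p 2) / 4]) :
    (∀ M C : ℝ, C ≠ -1 / 2 →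
        lieD N f ![0, M, C] = M * (1 - M) * (M - 7 / 10)) ∧
      (∀ M C : ℝ, C ≠ -1 / 2 → 0 < M → M < 1 →
        ((f ![0, M, C] = 0 ∧ lieD N f ![0, M, C] = 0) ↔ M = 7 / 10)) ∧
      (∀ C : ℝ, C ≠ -1 / 2 →
        (lieD N)^[2] f ![0, 7 / 10, C] = 63 / 200 * (2 * C - 1) / (2 * C + 1)) ∧
      (∀ C : ℝ, C ≠ -1 / 2 →
        ((lieD N)^[2] f ![0, 7 / 10, C] = 0 ↔ C = 1 / 2)) ∧
      (∀ C : ℝ, C ≠ -1 / 2 → C ≠ 1 / 2 →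
        (lieD N)^[2] f ![0, 7 / 10, C] ≠ 0) := by
  subst hf hN
  -- The first Lie derivative, as an explicit function.
  have hkey : (lieD (fun p => ![p 1 - 7 / 10,
      6 * p 2 / (1 + 2 * p 2) - 3 / 2, (1 - p 0 - p 2) / 4])
      (fun p : Fin 3 → ℝ => p 0 * p 1 * (1 - p 0) * (1 - p 1))) =
      fun z => (z 1 * (1 - z 1) * (1 - 2 * z 0)) * (z 1 - 7/10)
        + (z 0 * (1 - z 0) * (1 - 2 * z 1)) * (6 * z 2 * (1 + 2 * z 2)⁻¹ - 3/2) := by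
    funext z
    have hfd := (((hasFDerivAt_apply (𝕜 := ℝ) 0 z).mul (hasFDerivAt_apply (𝕜 := ℝ) 1 z)).mul
      ((hasFDerivAt_apply (𝕜 := ℝ) 0 z).const_sub 1)).mul
      ((hasFDerivAt_apply (𝕜 := ℝ) 1 z).const_sub 1)
    show fderiv ℝ _ z _ = _
    rw [HasFDerivAt.fderiv (f := fun p : Fin 3 → ℝ => p 0 * p 1 * (1 - p 0) * (1 - p 1)) hfd]
    simp only [ContinuousLinearMap.add_apply, ContinuousLinearMap.smul_apply,
      ContinuousLinearMap.neg_apply, ContinuousLinearMap.proj_apply, smul_eq_mul,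
      Matrix.cons_val_zero, Matrix.cons_val_one, Matrix.head_cons, Matrix.cons_val_two,
      Matrix.tail_cons, Pi.mul_apply]
    ring
  -- Part (a): value of the first Lie derivative on the face {X = 0}.
  have hval : ∀ M C : ℝ,
      lieD (fun p => ![p 1 - 7 / 10,
        6 * p 2 / (1 + 2 * p 2) - 3 / 2, (1 - p 0 - p 2) / 4])
        (fun p : Fin 3 → ℝ => p 0 * p 1 * (1 - p 0) * (1 - p 1)) ![0, M, C]
        = M * (1 - M) * (M - 7 / 10) := by
    intro M C
    rw [hkey]
    simp only [Matrix.cons_val_zero, Matrix.cons_val_one, Matrix.head_cons,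
      Matrix.cons_val_two, Matrix.tail_cons]
    ring
  -- Part (b): value of the second Lie derivative on the fold line.
  have hval2 : ∀ C : ℝ, C ≠ -1 / 2 →
      (lieD (fun p => ![p 1 - 7 / 10,
        6 * p 2 / (1 + 2 * p 2) - 3 / 2, (1 - p 0 - p 2) / 4]))^[2]
        (fun p : Fin 3 → ℝ => p 0 * p 1 * (1 - p 0) * (1 - p 1)) ![0, 7 / 10, C]
        = 63 / 200 * (2 * C - 1) / (2 * C + 1) := by
    intro C hC
    simp only [Function.iterate_succ, Function.iterate_zero, Function.comp_apply, id_eq]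
    rw [hkey]
    set z0 : Fin 3 → ℝ := ![0, 7/10, C] with hz0
    have hne : (1 : ℝ) + 2 * z0 2 ≠ 0 := by
      simp only [hz0, Matrix.cons_val_two, Matrix.tail_cons, Matrix.head_cons]
      intro h; apply hC; linarith
    have P0 := hasFDerivAt_apply (𝕜 := ℝ) 0 z0
    have P1 := hasFDerivAt_apply (𝕜 := ℝ) 1 z0
    have P2 := hasFDerivAt_apply (𝕜 := ℝ) 2 z0
    have hinv : HasFDerivAt (fun z : Fin 3 → ℝ => (1 + 2 * z 2)⁻¹)
        ((ContinuousLinearMap.smulRight (1 : ℝ →L[ℝ] ℝ) (-((1 + 2 * z0 2) ^ 2)⁻¹)).comp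
          ((2 : ℝ) • ContinuousLinearMap.proj 2)) z0 :=
      (hasFDerivAt_inv hne).comp z0 ((P2.const_mul 2).const_add 1)
    have hG := (((P1.mul (P1.const_sub 1)).mul ((P0.const_mul 2).const_sub 1)).mul
        (P1.sub_const (7/10))).add
      (((P0.mul (P0.const_sub 1)).mul ((P1.const_mul 2).const_sub 1)).mul
        (((P2.const_mul 6).mul hinv).sub_const (3/2)))
    unfold lieD
    rw [HasFDerivAt.fderiv (f := fun z : Fin 3 → ℝ => z 1 * (1 - z 1) * (1 - 2 * z 0) * (z 1 - 7/10)
        + z 0 * (1 - z 0) * (1 - 2 * z 1) * (6 * z 2 * (1 + 2 * z 2)⁻¹ - 3/2)) hG]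
    simp only [ContinuousLinearMap.add_apply, ContinuousLinearMap.smul_apply,
      ContinuousLinearMap.neg_apply, ContinuousLinearMap.proj_apply, smul_eq_mul,
      ContinuousLinearMap.coe_comp', Function.comp_apply,
      ContinuousLinearMap.smulRight_apply, ContinuousLinearMap.one_apply, hz0,
      Matrix.cons_val_zero, Matrix.cons_val_one, Matrix.head_cons, Matrix.cons_val_two,
      Matrix.tail_cons, Pi.mul_apply]
    have h1 : (1 : ℝ) + 2 * C ≠ 0 := by intro h; apply hC; linarith
    have h2 : (2 : ℝ) * C + 1 ≠ 0 := by intro h; apply hC; linarith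
    field_simp
    ring
  refine ⟨fun M C _ => hval M C, ?_, fun C hC => hval2 C hC, ?_, ?_⟩
  · intro M C hC hM0 hM1
    constructor
    · rintro ⟨-, h2⟩
      rw [hval M C] at h2
      rcases mul_eq_zero.1 h2 with h | h
      · rcases mul_eq_zero.1 h with h | h
        · exact absurd h (ne_of_gt hM0)
        · exact absurd h (by intro hh; nlinarith)
      · linarith
    · rintro rfl
      refine ⟨by simp, ?_⟩
      rw [hval]; norm_num
  · intro C hC
    rw [hval2 C hC]
    have h2 : (2 : ℝ) * C + 1 ≠ 0 := by intro h; apply hC; linarith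
    rw [div_eq_zero_iff]
    constructor
    · rintro (h | h)
      · nlinarith [h]
      · exact absurd h h2
    · rintro rfl; left; ring
  · intro C hC hC2 h0
    rw [hval2 C hC] at h0
    have h2 : (2 : ℝ) * C + 1 ≠ 0 := by intro h; apply hC; linarith
    rcases div_eq_zero_iff.1 h0 with h | h
    · apply hC2; nlinarith [h]
    · exact h2 h
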